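/- Let R be a commutative ring, I and J ideals of R, and x, y elements of R forming a regular sequence on R. Then the sequence 0 → R/((I:y) ∩ (J:x)) → R/I ⊕ R/J → (x,y)/(xI + yJ) → 0 is exact, where the first map sends r to ((-ry), (rx)) and the second sends (a,b) to ax + by (all taken modulo the appropriate submodules). -/

import Mathlib

/-- For `x, y` a regular sequence on `R` (i.e. `x` a nonzerodivisor on `R` and
`y` a nonzerodivisor on `R/(x)`) and ideals `I, J`, the sequence
`0 → R/((I:y) ∩ (J:x)) → R/I ⊕ R/J → (x,y)/(xI + yJ) → 0`
with maps `ψ(r) = (-ry, rx)` and `φ(a,b) = ax + by` is exact. -/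
theorem stmt0 {R : Type*} [CommRing R] (I J : Ideal R) (x y : R)
    (hx : x ∈ nonZeroDivisors R)
    (hy : ∀ r : R, y * r ∈ Ideal.span {x} → r ∈ Ideal.span {x}) :
    ∃ (ψ : (R ⧸ (I.colon (Ideal.span {y}) ⊓ J.colon (Ideal.span {x}))) →ₗ[R]
        ((R ⧸ I) × (R ⧸ J)))
      (φ : ((R ⧸ I) × (R ⧸ J)) →ₗ[R]
        (↥(Ideal.span {x, y}) ⧸ (Submodule.comap (Ideal.span {x, y} : Ideal R).subtype
            (Ideal.span {x} * I + Ideal.span {y} * J)))),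
      (∀ r : R, ψ (Ideal.Quotient.mk _ r) =
          (Ideal.Quotient.mk I (-(r * y)), Ideal.Quotient.mk J (r * x))) ∧
      (∀ a b : R, φ (Ideal.Quotient.mk I a, Ideal.Quotient.mk J b) =
          Submodule.Quotient.mk
            ⟨a * x + b * y,
              Ideal.add_mem _
                (Ideal.mul_mem_left _ a (Ideal.subset_span (Set.mem_insert _ _)))
                (Ideal.mul_mem_left _ b
                  (Ideal.subset_span (Set.mem_insert_of_mem _ rfl)))⟩) ∧
      Function.Injective ψ ∧ Function.Exact ψ φ ∧ Function.Surjective φ := by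
  classical
  set K : Ideal R := I.colon (Ideal.span {y}) ⊓ J.colon (Ideal.span {x}) with hKdef
  set S : Ideal R := Ideal.span {x, y} with hSdef
  have hxS : x ∈ S := Ideal.subset_span (Set.mem_insert _ _)
  have hyS : y ∈ S := Ideal.subset_span (Set.mem_insert_of_mem _ rfl)
  set P : Ideal R := Ideal.span {x} * I + Ideal.span {y} * J with hPdef
  set N : Submodule R S := Submodule.comap (S : Ideal R).subtype P with hNdef
  -- ψ
  let f1 : R →ₗ[R] R ⧸ I := I.mkQ.comp (LinearMap.toSpanSingleton R R (-y))
  let f2 : R →ₗ[R] R ⧸ J := J.mkQ.comp (LinearMap.toSpanSingleton R R x)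
  let ψ0 : R →ₗ[R] (R ⧸ I) × (R ⧸ J) := f1.prod f2
  have hψ0 : ∀ r : R, ψ0 r =
      (Ideal.Quotient.mk I (-(r * y)), Ideal.Quotient.mk J (r * x)) := by
    intro r
    simp only [ψ0, f1, f2, LinearMap.prod_apply, LinearMap.comp_apply,
      LinearMap.toSpanSingleton_apply, Submodule.mkQ_apply, smul_eq_mul, Function.prod]
    rw [mul_neg]
    rfl
  have hker : LinearMap.ker ψ0 = K := by
    ext r
    simp only [LinearMap.mem_ker, hψ0, Prod.mk_eq_zero, Ideal.Quotient.eq_zero_iff_mem,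
      neg_mem_iff, hKdef, Submodule.mem_inf, Ideal.mem_colon_span_singleton]
  let ψ : (R ⧸ K) →ₗ[R] (R ⧸ I) × (R ⧸ J) := Submodule.liftQ K ψ0 hker.ge
  have hψ : ∀ r : R, ψ (Ideal.Quotient.mk K r) =
      (Ideal.Quotient.mk I (-(r * y)), Ideal.Quotient.mk J (r * x)) := fun r => hψ0 r
  -- φ
  let xel : S := ⟨x, hxS⟩
  let yel : S := ⟨y, hyS⟩
  let g1 : R →ₗ[R] (S ⧸ N) := N.mkQ.comp (LinearMap.toSpanSingleton R S xel)
  let g2 : R →ₗ[R] (S ⧸ N) := N.mkQ.comp (LinearMap.toSpanSingleton R S yel)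
  have hg1 : I ≤ LinearMap.ker g1 := by
    intro a ha
    simp only [g1, LinearMap.mem_ker, LinearMap.comp_apply,
      LinearMap.toSpanSingleton_apply, Submodule.mkQ_apply, Submodule.Quotient.mk_eq_zero]
    show (a • xel : S).1 ∈ P
    show a • x ∈ P
    rw [smul_eq_mul]
    exact Submodule.mem_sup_left (mul_comm a x ▸
      Ideal.mul_mem_mul (Ideal.subset_span rfl) ha)
  have hg2 : J ≤ LinearMap.ker g2 := by
    intro b hb
    simp only [g2, LinearMap.mem_ker, LinearMap.comp_apply,
      LinearMap.toSpanSingleton_apply, Submodule.mkQ_apply, Submodule.Quotient.mk_eq_zero]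
    show b • y ∈ P
    rw [smul_eq_mul]
    exact Submodule.mem_sup_right (mul_comm b y ▸
      Ideal.mul_mem_mul (Ideal.subset_span rfl) hb)
  let φ1 : (R ⧸ I) →ₗ[R] (S ⧸ N) := Submodule.liftQ I g1 hg1
  let φ2 : (R ⧸ J) →ₗ[R] (S ⧸ N) := Submodule.liftQ J g2 hg2
  let φ : ((R ⧸ I) × (R ⧸ J)) →ₗ[R] (S ⧸ N) := φ1.coprod φ2
  have hφ : ∀ a b : R, φ (Ideal.Quotient.mk I a, Ideal.Quotient.mk J b) =
      Submodule.Quotient.mk ⟨a * x + b * y,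
        Ideal.add_mem _ (Ideal.mul_mem_left _ a hxS) (Ideal.mul_mem_left _ b hyS)⟩ := by
    intro a b
    show N.mkQ (a • xel) + N.mkQ (b • yel) = _
    rw [← map_add]
    congr 1
  refine ⟨ψ, φ, hψ, fun a b => hφ a b, ?_, ?_, ?_⟩
  · rw [← LinearMap.ker_eq_bot]
    exact Submodule.ker_liftQ_eq_bot K ψ0 hker.ge hker.le
  · rw [LinearMap.exact_iff]
    have hrange : LinearMap.range ψ = LinearMap.range ψ0 := Submodule.range_liftQ _ _ _
    rw [hrange]
    ext z
    obtain ⟨a, ha⟩ := Ideal.Quotient.mk_surjective z.1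
    obtain ⟨b, hb⟩ := Ideal.Quotient.mk_surjective z.2
    have hz : z = (Ideal.Quotient.mk I a, Ideal.Quotient.mk J b) := by
      rw [Prod.ext_iff]; exact ⟨ha.symm, hb.symm⟩
    subst hz
    constructor
    · intro hmem
      rw [LinearMap.mem_ker, hφ, Submodule.Quotient.mk_eq_zero] at hmem
      have hmem' : a * x + b * y ∈ P := hmem
      rw [hPdef, Submodule.add_eq_sup, Submodule.mem_sup] at hmem'
      obtain ⟨p, hp, q, hq, hpq⟩ := hmem'
      rw [Ideal.mem_span_singleton_mul] at hp hq
      obtain ⟨i, hi, rfl⟩ := hp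
      obtain ⟨j, hj, rfl⟩ := hq
      have key : y * (j - b) = x * (a - i) := by linear_combination hpq
      have hjb : j - b ∈ Ideal.span {x} := hy _ (by
        rw [key]; exact Ideal.mem_span_singleton.mpr ⟨a - i, rfl⟩)
      obtain ⟨c, hc⟩ := Ideal.mem_span_singleton.mp hjb
      have hax : x * (a - i - y * c) = 0 := by
        linear_combination -key + y * hc
      have ha' : a - i - y * c = 0 := hx.2 _ (by linear_combination hax)
      refine ⟨-c, ?_⟩
      rw [hψ0]
      refine Prod.ext ?_ ?_
      · show Ideal.Quotient.mk I (-(-c * y)) = Ideal.Quotient.mk I a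
        rw [Ideal.Quotient.eq]
        have h1 : -(-c * y) - a = -i := by linear_combination -ha'
        rw [h1]; exact neg_mem hi
      · show Ideal.Quotient.mk J (-c * x) = Ideal.Quotient.mk J b
        rw [Ideal.Quotient.eq]
        have h2 : -c * x - b = -j := by linear_combination hc
        rw [h2]; exact neg_mem hj
    · rintro ⟨r, hr⟩
      rw [LinearMap.mem_ker, ← hr, hψ0, hφ, Submodule.Quotient.mk_eq_zero]
      show -(r * y) * x + r * x * y ∈ P
      have h0 : -(r * y) * x + r * x * y = 0 := by ring
      rw [h0]; exact zero_mem P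
  · intro z
    obtain ⟨m, rfl⟩ := Submodule.Quotient.mk_surjective N z
    obtain ⟨a, b, hab⟩ := Ideal.mem_span_pair.mp m.2
    refine ⟨(Ideal.Quotient.mk I a, Ideal.Quotient.mk J b), ?_⟩
    rw [hφ]
    congr 1
    exact Subtype.ext hab
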